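/- For any constants k, k̄ ∈ ℂ, the operators D_s^{(k,k̄)} close according to the 𝔟𝔪𝔰₄ bracket: for all symmetry parameters s₁, s₂ and all σ ∈ R[u], D_{s₁}^{(k,k̄)}(D_{s₂}^{(k,k̄)}σ) − D_{s₂}^{(k,k̄)}(D_{s₁}^{(k,k̄)}σ) = D_{[s₁,s₂]}^{(k,k̄)}σ. (For (k,k̄) = (3/2,−1/2), (2,0) and ((5−i)/2,(1+i)/2) these are the homogeneous parts of the transformation laws of σ⁰, ∂_uσ⁰ and Ψ⁰_i in equation (16b) with ω̃ = 0.) -/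

import Mathlib

/-!
Common setup: we work over `ℂ` with flat conformal factor `φ̃ = 0`, so `P = √2` and the
eth operators reduce to `ð = √2 ∂_ζ̄` and `ð̄ = √2 ∂_ζ` on the ring `R[u]` of polynomials
in `u` with coefficients in `R = ℂ[ζ,ζ⁻¹,ζ̄,ζ̄⁻¹]`, which also carries `∂_u`.

`R[u]` is modelled as `RU := AddMonoidAlgebra ℂ (ℤ × ℤ × ℕ)`, the monomial
`single (m,n,k) 1` representing `ζ^m ζ̄^n u^k`; `R` is `AddMonoidAlgebra ℂ (ℤ × ℤ)`, and
`ℂ[ζ,ζ⁻¹]`, `ℂ[ζ̄,ζ̄⁻¹]` are copies of `AddMonoidAlgebra ℂ ℤ`, all included into `RU`.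
-/

/-- `R[u]`, with `single (m,n,k) 1 = ζ^m ζ̄^n u^k`. -/
abbrev RU : Type := AddMonoidAlgebra ℂ (ℤ × ℤ × ℕ)

/-- `R = ℂ[ζ,ζ⁻¹,ζ̄,ζ̄⁻¹]`. -/
abbrev LR : Type := AddMonoidAlgebra ℂ (ℤ × ℤ)

/-- A copy of `ℂ[ζ,ζ⁻¹]` (resp. `ℂ[ζ̄,ζ̄⁻¹]`). -/
abbrev W : Type := AddMonoidAlgebra ℂ ℤ

/-- `ð = √2 ∂_ζ̄` on `R[u]`. -/
noncomputable def eth : RU →ₗ[ℂ] RU :=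
  (Finsupp.lsum ℂ fun p : ℤ × ℤ × ℕ =>
    ((Real.sqrt 2 : ℂ) * p.2.1) • AddMonoidAlgebra.lsingle (p.1, p.2.1 - 1, p.2.2)) ∘ₗ (AddMonoidAlgebra.coeffLinearEquiv ℂ).toLinearMap

/-- `ð̄ = √2 ∂_ζ` on `R[u]`. -/
noncomputable def ethBar : RU →ₗ[ℂ] RU :=
  (Finsupp.lsum ℂ fun p : ℤ × ℤ × ℕ =>
    ((Real.sqrt 2 : ℂ) * p.1) • AddMonoidAlgebra.lsingle (p.1 - 1, p.2.1, p.2.2)) ∘ₗ (AddMonoidAlgebra.coeffLinearEquiv ℂ).toLinearMap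

/-- `∂_u` on `R[u]`. -/
noncomputable def du : RU →ₗ[ℂ] RU :=
  (Finsupp.lsum ℂ fun p : ℤ × ℤ × ℕ =>
    (p.2.2 : ℂ) • AddMonoidAlgebra.lsingle (p.1, p.2.1, p.2.2 - 1)) ∘ₗ (AddMonoidAlgebra.coeffLinearEquiv ℂ).toLinearMap

/-- The element `u ∈ R[u]`. -/
noncomputable def uVar : RU := AddMonoidAlgebra.single ((0 : ℤ), (0 : ℤ), (1 : ℕ)) (1 : ℂ)

/-- The inclusion `ℂ[ζ̄,ζ̄⁻¹] ↪ R[u]`, `ζ̄^n ↦ ζ̄^n`. -/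
noncomputable def incY : W →ₗ[ℂ] RU := (Finsupp.lsum ℂ fun n : ℤ => AddMonoidAlgebra.lsingle (0, n, 0)) ∘ₗ (AddMonoidAlgebra.coeffLinearEquiv ℂ).toLinearMap

/-- The inclusion `ℂ[ζ,ζ⁻¹] ↪ R[u]`, `ζ^m ↦ ζ^m`. -/
noncomputable def incYb : W →ₗ[ℂ] RU := (Finsupp.lsum ℂ fun m : ℤ => AddMonoidAlgebra.lsingle (m, 0, 0)) ∘ₗ (AddMonoidAlgebra.coeffLinearEquiv ℂ).toLinearMap

/-- The inclusion `R ↪ R[u]`. -/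
noncomputable def incT : LR →ₗ[ℂ] RU :=
  (Finsupp.lsum ℂ fun q : ℤ × ℤ => AddMonoidAlgebra.lsingle (q.1, q.2, 0)) ∘ₗ (AddMonoidAlgebra.coeffLinearEquiv ℂ).toLinearMap

/-- `ð` on the copy `ℂ[ζ̄,ζ̄⁻¹]` (equivalently `ð̄` on the copy `ℂ[ζ,ζ⁻¹]`):
`√2` times the formal derivative. -/
noncomputable def ethW : W →ₗ[ℂ] W :=
  (Finsupp.lsum ℂ fun n : ℤ => ((Real.sqrt 2 : ℂ) * n) • AddMonoidAlgebra.lsingle (n - 1)) ∘ₗ (AddMonoidAlgebra.coeffLinearEquiv ℂ).toLinearMap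

/-- `ð = √2 ∂_ζ̄` on `R`. -/
noncomputable def ethR : LR →ₗ[ℂ] LR :=
  (Finsupp.lsum ℂ fun q : ℤ × ℤ => ((Real.sqrt 2 : ℂ) * q.2) • AddMonoidAlgebra.lsingle (q.1, q.2 - 1)) ∘ₗ (AddMonoidAlgebra.coeffLinearEquiv ℂ).toLinearMap

/-- `ð̄ = √2 ∂_ζ` on `R`. -/
noncomputable def ethBarR : LR →ₗ[ℂ] LR :=
  (Finsupp.lsum ℂ fun q : ℤ × ℤ => ((Real.sqrt 2 : ℂ) * q.1) • AddMonoidAlgebra.lsingle (q.1 - 1, q.2)) ∘ₗ (AddMonoidAlgebra.coeffLinearEquiv ℂ).toLinearMap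

/-- The inclusion `ℂ[ζ̄,ζ̄⁻¹] ↪ R`. -/
noncomputable def jY : W →ₗ[ℂ] LR := (Finsupp.lsum ℂ fun n : ℤ => AddMonoidAlgebra.lsingle (0, n)) ∘ₗ (AddMonoidAlgebra.coeffLinearEquiv ℂ).toLinearMap

/-- The inclusion `ℂ[ζ,ζ⁻¹] ↪ R`. -/
noncomputable def jYb : W →ₗ[ℂ] LR := (Finsupp.lsum ℂ fun m : ℤ => AddMonoidAlgebra.lsingle (m, 0)) ∘ₗ (AddMonoidAlgebra.coeffLinearEquiv ℂ).toLinearMap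

/-- A symmetry parameter `s = (𝒴, 𝒴̄, T)` with `𝒴 ∈ ℂ[ζ̄,ζ̄⁻¹]`, `𝒴̄ ∈ ℂ[ζ,ζ⁻¹]`
(so that `ð̄𝒴 = 0 = ð𝒴̄`, the conformal Killing equations) and `T ∈ R`. -/
structure SymParam : Type where
  /-- `𝒴`, a function of `ζ̄`. -/
  cY : W
  /-- `𝒴̄`, a function of `ζ`. -/
  cYb : W
  /-- The supertranslation part `T ∈ R`. -/
  T : LR

/-- `ψ_s = ð𝒴 + ð̄𝒴̄ ∈ R`. -/
noncomputable def psiR (s : SymParam) : LR := jY (ethW s.cY) + jYb (ethW s.cYb)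

/-- `f_s = T + (u/2) ψ_s ∈ R[u]`. -/
noncomputable def fOf (s : SymParam) : RU :=
  incT s.T + (1 / 2 : ℂ) • (uVar * incT (psiR s))

/-- The `𝔟𝔪𝔰₄` bracket `[s₁,s₂] = ŝ` on symmetry parameters:
`𝒴̂ = 𝒴₁ð𝒴₂ − 𝒴₂ð𝒴₁`, `𝒴̄̂ = 𝒴̄₁ð̄𝒴̄₂ − 𝒴̄₂ð̄𝒴̄₁`,
`T̂ = 𝒴₁ðT₂ + 𝒴̄₁ð̄T₂ − 𝒴₂ðT₁ − 𝒴̄₂ð̄T₁ − ½(ψ₁T₂ − ψ₂T₁)`. -/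
noncomputable def sBracket (s₁ s₂ : SymParam) : SymParam where
  cY := s₁.cY * ethW s₂.cY - s₂.cY * ethW s₁.cY
  cYb := s₁.cYb * ethW s₂.cYb - s₂.cYb * ethW s₁.cYb
  T := jY s₁.cY * ethR s₂.T + jYb s₁.cYb * ethBarR s₂.T
      - jY s₂.cY * ethR s₁.T - jYb s₂.cYb * ethBarR s₁.T
      - (1 / 2 : ℂ) • (psiR s₁ * s₂.T - psiR s₂ * s₁.T)

/-- The first-order differential operator
`D_s^{(k,k̄)} = f_s∂_u + 𝒴ð + 𝒴̄ð̄ + k(ð𝒴) + k̄(ð̄𝒴̄)` on `R[u]`, the last two terms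
acting by multiplication. -/
noncomputable def Dop (k kb : ℂ) (s : SymParam) : RU →ₗ[ℂ] RU :=
  (LinearMap.mulLeft ℂ (fOf s)).comp du
    + (LinearMap.mulLeft ℂ (incY s.cY)).comp eth
    + (LinearMap.mulLeft ℂ (incYb s.cYb)).comp ethBar
    + k • LinearMap.mulLeft ℂ (eth (incY s.cY))
    + kb • LinearMap.mulLeft ℂ (ethBar (incYb s.cYb))

-- single lemmas
lemma eth_single (p : ℤ × ℤ × ℕ) (c : ℂ) :
    eth (AddMonoidAlgebra.single p c)
      = ((Real.sqrt 2 : ℂ) * p.2.1) • AddMonoidAlgebra.single (p.1, p.2.1 - 1, p.2.2) c := by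
  rw [eth]; rw [LinearMap.comp_apply]; erw [Finsupp.lsum_single]; rfl
lemma ethBar_single (p : ℤ × ℤ × ℕ) (c : ℂ) :
    ethBar (AddMonoidAlgebra.single p c)
      = ((Real.sqrt 2 : ℂ) * p.1) • AddMonoidAlgebra.single (p.1 - 1, p.2.1, p.2.2) c := by
  rw [ethBar]; rw [LinearMap.comp_apply]; erw [Finsupp.lsum_single]; rfl
lemma du_single (p : ℤ × ℤ × ℕ) (c : ℂ) :
    du (AddMonoidAlgebra.single p c)
      = (p.2.2 : ℂ) • AddMonoidAlgebra.single (p.1, p.2.1, p.2.2 - 1) c := by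
  rw [du]; rw [LinearMap.comp_apply]; erw [Finsupp.lsum_single]; rfl
lemma ethW_single (n : ℤ) (c : ℂ) :
    ethW (AddMonoidAlgebra.single n c) = ((Real.sqrt 2 : ℂ) * n) • AddMonoidAlgebra.single (n - 1) c := by
  rw [ethW]; rw [LinearMap.comp_apply]; erw [Finsupp.lsum_single]; rfl
lemma ethR_single (q : ℤ × ℤ) (c : ℂ) :
    ethR (AddMonoidAlgebra.single q c)
      = ((Real.sqrt 2 : ℂ) * q.2) • AddMonoidAlgebra.single (q.1, q.2 - 1) c := by
  rw [ethR]; rw [LinearMap.comp_apply]; erw [Finsupp.lsum_single]; rfl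
lemma ethBarR_single (q : ℤ × ℤ) (c : ℂ) :
    ethBarR (AddMonoidAlgebra.single q c)
      = ((Real.sqrt 2 : ℂ) * q.1) • AddMonoidAlgebra.single (q.1 - 1, q.2) c := by
  rw [ethBarR]; rw [LinearMap.comp_apply]; erw [Finsupp.lsum_single]; rfl
lemma incY_single (n : ℤ) (c : ℂ) :
    incY (AddMonoidAlgebra.single n c) = AddMonoidAlgebra.single ((0:ℤ), n, (0:ℕ)) c := by
  rw [incY]; rw [LinearMap.comp_apply]; erw [Finsupp.lsum_single]; rfl
lemma incYb_single (m : ℤ) (c : ℂ) :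
    incYb (AddMonoidAlgebra.single m c) = AddMonoidAlgebra.single (m, (0:ℤ), (0:ℕ)) c := by
  rw [incYb]; rw [LinearMap.comp_apply]; erw [Finsupp.lsum_single]; rfl
lemma incT_single (q : ℤ × ℤ) (c : ℂ) :
    incT (AddMonoidAlgebra.single q c) = AddMonoidAlgebra.single (q.1, q.2, (0:ℕ)) c := by
  rw [incT]; rw [LinearMap.comp_apply]; erw [Finsupp.lsum_single]; rfl
lemma jY_single (n : ℤ) (c : ℂ) :
    jY (AddMonoidAlgebra.single n c) = AddMonoidAlgebra.single ((0:ℤ), n) c := by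
  rw [jY]; rw [LinearMap.comp_apply]; erw [Finsupp.lsum_single]; rfl
lemma jYb_single (m : ℤ) (c : ℂ) :
    jYb (AddMonoidAlgebra.single m c) = AddMonoidAlgebra.single (m, (0:ℤ)) c := by
  rw [jYb]; rw [LinearMap.comp_apply]; erw [Finsupp.lsum_single]; rfl

lemma RU_single_mul (p q : ℤ × ℤ × ℕ) (c d : ℂ) :
    (AddMonoidAlgebra.single p c * AddMonoidAlgebra.single q d : RU)
      = AddMonoidAlgebra.single (p + q) (c * d) :=
  AddMonoidAlgebra.single_mul_single ..

-- Leibniz rules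
lemma eth_mul (x y : RU) : eth (x * y) = eth x * y + x * eth y := by
  induction x using AddMonoidAlgebra.induction_linear with
  | zero => simp
  | add a b ha hb => simp only [add_mul, map_add, ha, hb]; ring
  | single p c =>
    induction y using AddMonoidAlgebra.induction_linear with
    | zero => simp
    | add a b ha hb => simp only [mul_add, map_add, ha, hb]; ring
    | single q d =>
      obtain ⟨m, n, j⟩ := p; obtain ⟨m', n', j'⟩ := q
      have e : ((m,n,j) + (m',n',j') : ℤ×ℤ×ℕ) = (m+m', n+n', j+j') := rfl
      have e1 : ((m,n-1,j) + (m',n',j') : ℤ×ℤ×ℕ) = (m+m', n+n'-1, j+j') := by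
        simp [Prod.ext_iff]; ring
      have e2 : ((m,n,j) + (m',n'-1,j') : ℤ×ℤ×ℕ) = (m+m', n+n'-1, j+j') := by
        simp [Prod.ext_iff]; ring
      rw [RU_single_mul, eth_single, eth_single, eth_single, smul_mul_assoc,
        mul_smul_comm, RU_single_mul, RU_single_mul]
      simp only [e, e1, e2]
      push_cast
      rw [mul_add, add_smul]

lemma ethBar_mul (x y : RU) : ethBar (x * y) = ethBar x * y + x * ethBar y := by
  induction x using AddMonoidAlgebra.induction_linear with
  | zero => simp
  | add a b ha hb => simp only [add_mul, map_add, ha, hb]; ring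
  | single p c =>
    induction y using AddMonoidAlgebra.induction_linear with
    | zero => simp
    | add a b ha hb => simp only [mul_add, map_add, ha, hb]; ring
    | single q d =>
      obtain ⟨m, n, j⟩ := p; obtain ⟨m', n', j'⟩ := q
      have e : ((m,n,j) + (m',n',j') : ℤ×ℤ×ℕ) = (m+m', n+n', j+j') := rfl
      have e1 : ((m-1,n,j) + (m',n',j') : ℤ×ℤ×ℕ) = (m+m'-1, n+n', j+j') := by
        simp [Prod.ext_iff]; ring
      have e2 : ((m,n,j) + (m'-1,n',j') : ℤ×ℤ×ℕ) = (m+m'-1, n+n', j+j') := by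
        simp [Prod.ext_iff]; ring
      rw [RU_single_mul, ethBar_single, ethBar_single, ethBar_single, smul_mul_assoc,
        mul_smul_comm, RU_single_mul, RU_single_mul]
      simp only [e, e1, e2]
      push_cast
      rw [mul_add, add_smul]

lemma nat_smul_helper (P : ℤ × ℤ) (a b : ℕ) (z : ℂ) :
    ((a+b : ℕ) : ℂ) • (AddMonoidAlgebra.single ((P.1, P.2, a+b-1) : ℤ×ℤ×ℕ) z : RU)
      = ((a:ℂ)) • AddMonoidAlgebra.single ((P.1, P.2, (a-1)+b) : ℤ×ℤ×ℕ) z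
        + ((b:ℂ)) • AddMonoidAlgebra.single ((P.1, P.2, a+(b-1)) : ℤ×ℤ×ℕ) z := by
  rcases a with _ | a
  · simp only [Nat.zero_add, Nat.cast_zero, zero_smul, zero_add]
  · rcases b with _ | b
    · simp only [Nat.add_zero, Nat.cast_zero, zero_smul, add_zero, Nat.succ_sub_one]
    · have e1 : (a+1) + (b+1) - 1 = a + b + 1 := by omega
      have e2 : (a+1-1) + (b+1) = a + b + 1 := by omega
      have e3 : (a+1) + (b+1-1) = a + b + 1 := by omega
      rw [e1, e2, e3, ← add_smul]
      congr 1
      push_cast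
      ring

lemma du_mul (x y : RU) : du (x * y) = du x * y + x * du y := by
  induction x using AddMonoidAlgebra.induction_linear with
  | zero => simp
  | add a b ha hb => simp only [add_mul, map_add, ha, hb]; ring
  | single p c =>
    induction y using AddMonoidAlgebra.induction_linear with
    | zero => simp
    | add a b ha hb => simp only [mul_add, map_add, ha, hb]; ring
    | single q d =>
      obtain ⟨m, n, j⟩ := p; obtain ⟨m', n', j'⟩ := q
      have e : ((m,n,j) + (m',n',j') : ℤ×ℤ×ℕ) = (m+m', n+n', j+j') := rfl
      have e1 : ((m,n,j-1) + (m',n',j') : ℤ×ℤ×ℕ) = (m+m', n+n', (j-1)+j') := rfl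
      have e2 : ((m,n,j) + (m',n',j'-1) : ℤ×ℤ×ℕ) = (m+m', n+n', j+(j'-1)) := rfl
      rw [RU_single_mul, du_single, du_single, du_single, smul_mul_assoc,
        mul_smul_comm, RU_single_mul, RU_single_mul]
      simp only [e, e1, e2]
      exact nat_smul_helper (m+m', n+n') j j' (c*d)

lemma W_single_mul (p q : ℤ) (c d : ℂ) :
    (AddMonoidAlgebra.single p c * AddMonoidAlgebra.single q d : W)
      = AddMonoidAlgebra.single (p + q) (c * d) :=
  AddMonoidAlgebra.single_mul_single ..

lemma ethW_mul (x y : W) : ethW (x * y) = ethW x * y + x * ethW y := by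
  induction x using AddMonoidAlgebra.induction_linear with
  | zero => simp
  | add a b ha hb => simp only [add_mul, map_add, ha, hb]; ring
  | single p c =>
    induction y using AddMonoidAlgebra.induction_linear with
    | zero => simp
    | add a b ha hb => simp only [mul_add, map_add, ha, hb]; ring
    | single q d =>
      have e1 : p - 1 + q = p + q - 1 := by ring
      have e2 : p + (q - 1) = p + q - 1 := by ring
      rw [W_single_mul, ethW_single, ethW_single, ethW_single, smul_mul_assoc,
        mul_smul_comm, W_single_mul, W_single_mul, e1, e2]
      push_cast
      rw [mul_add, add_smul]

-- commutation lemmas (normalize: du outermost..., orientation: eth(du)→du(eth) etc.)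
lemma ethBar_eth (x : RU) : ethBar (eth x) = eth (ethBar x) := by
  induction x using AddMonoidAlgebra.induction_linear with
  | zero => simp
  | add a b ha hb => simp only [map_add, ha, hb]
  | single p c =>
    obtain ⟨m, n, j⟩ := p
    rw [eth_single, ethBar_single, map_smul, map_smul, eth_single, ethBar_single,
      smul_smul, smul_smul, mul_comm]

lemma eth_du (x : RU) : eth (du x) = du (eth x) := by
  induction x using AddMonoidAlgebra.induction_linear with
  | zero => simp
  | add a b ha hb => simp only [map_add, ha, hb]
  | single p c =>
    obtain ⟨m, n, j⟩ := p
    rw [eth_single, du_single, map_smul, map_smul, eth_single, du_single,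
      smul_smul, smul_smul, mul_comm]

lemma ethBar_du (x : RU) : ethBar (du x) = du (ethBar x) := by
  induction x using AddMonoidAlgebra.induction_linear with
  | zero => simp
  | add a b ha hb => simp only [map_add, ha, hb]
  | single p c =>
    obtain ⟨m, n, j⟩ := p
    rw [ethBar_single, du_single, map_smul, map_smul, ethBar_single, du_single,
      smul_smul, smul_smul, mul_comm]

-- derivations on the inclusions
lemma eth_incY (w : W) : eth (incY w) = incY (ethW w) := by
  induction w using AddMonoidAlgebra.induction_linear with
  | zero => simp
  | add a b ha hb => simp only [map_add, ha, hb]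
  | single n c => rw [incY_single, eth_single, ethW_single, map_smul, incY_single]

lemma ethBar_incY (w : W) : ethBar (incY w) = 0 := by
  induction w using AddMonoidAlgebra.induction_linear with
  | zero => simp
  | add a b ha hb => simp only [map_add, ha, hb, add_zero]
  | single n c => rw [incY_single, ethBar_single]; simp

lemma du_incY (w : W) : du (incY w) = 0 := by
  induction w using AddMonoidAlgebra.induction_linear with
  | zero => simp
  | add a b ha hb => simp only [map_add, ha, hb, add_zero]
  | single n c => rw [incY_single, du_single]; simp

lemma ethBar_incYb (w : W) : ethBar (incYb w) = incYb (ethW w) := by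
  induction w using AddMonoidAlgebra.induction_linear with
  | zero => simp
  | add a b ha hb => simp only [map_add, ha, hb]
  | single n c => rw [incYb_single, ethBar_single, ethW_single, map_smul, incYb_single]

lemma eth_incYb (w : W) : eth (incYb w) = 0 := by
  induction w using AddMonoidAlgebra.induction_linear with
  | zero => simp
  | add a b ha hb => simp only [map_add, ha, hb, add_zero]
  | single n c => rw [incYb_single, eth_single]; simp

lemma du_incYb (w : W) : du (incYb w) = 0 := by
  induction w using AddMonoidAlgebra.induction_linear with
  | zero => simp
  | add a b ha hb => simp only [map_add, ha, hb, add_zero]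
  | single n c => rw [incYb_single, du_single]; simp

lemma eth_incT (x : LR) : eth (incT x) = incT (ethR x) := by
  induction x using AddMonoidAlgebra.induction_linear with
  | zero => simp
  | add a b ha hb => simp only [map_add, ha, hb]
  | single q c => rw [incT_single, eth_single, ethR_single, map_smul, incT_single]

lemma ethBar_incT (x : LR) : ethBar (incT x) = incT (ethBarR x) := by
  induction x using AddMonoidAlgebra.induction_linear with
  | zero => simp
  | add a b ha hb => simp only [map_add, ha, hb]
  | single q c => rw [incT_single, ethBar_single, ethBarR_single, map_smul, incT_single]

lemma du_incT (x : LR) : du (incT x) = 0 := by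
  induction x using AddMonoidAlgebra.induction_linear with
  | zero => simp
  | add a b ha hb => simp only [map_add, ha, hb, add_zero]
  | single q c => rw [incT_single, du_single]; simp

-- uVar facts
lemma eth_uVar : eth uVar = 0 := by rw [uVar, eth_single]; simp
lemma ethBar_uVar : ethBar uVar = 0 := by rw [uVar, ethBar_single]; simp
lemma du_uVar : du uVar = 1 := by
  rw [uVar, du_single]
  simp only [Nat.cast_one, one_smul]
  rfl

-- multiplicativity of inclusions
lemma LR_single_mul (p q : ℤ × ℤ) (c d : ℂ) :
    (AddMonoidAlgebra.single p c * AddMonoidAlgebra.single q d : LR)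
      = AddMonoidAlgebra.single (p + q) (c * d) :=
  AddMonoidAlgebra.single_mul_single ..

lemma incT_mul (x y : LR) : incT (x * y) = incT x * incT y := by
  induction x using AddMonoidAlgebra.induction_linear with
  | zero => simp
  | add a b ha hb => simp only [add_mul, map_add, ha, hb]
  | single p c =>
    induction y using AddMonoidAlgebra.induction_linear with
    | zero => simp
    | add a b ha hb => simp only [mul_add, map_add, ha, hb]
    | single q d =>
      rw [LR_single_mul, incT_single, incT_single, incT_single, RU_single_mul]
      rfl

lemma incY_mul (x y : W) : incY (x * y) = incY x * incY y := by
  induction x using AddMonoidAlgebra.induction_linear with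
  | zero => simp
  | add a b ha hb => simp only [add_mul, map_add, ha, hb]
  | single p c =>
    induction y using AddMonoidAlgebra.induction_linear with
    | zero => simp
    | add a b ha hb => simp only [mul_add, map_add, ha, hb]
    | single q d =>
      rw [W_single_mul, incY_single, incY_single, incY_single, RU_single_mul]
      rfl

lemma incYb_mul (x y : W) : incYb (x * y) = incYb x * incYb y := by
  induction x using AddMonoidAlgebra.induction_linear with
  | zero => simp
  | add a b ha hb => simp only [add_mul, map_add, ha, hb]
  | single p c =>
    induction y using AddMonoidAlgebra.induction_linear with
    | zero => simp
    | add a b ha hb => simp only [mul_add, map_add, ha, hb]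
    | single q d =>
      rw [W_single_mul, incYb_single, incYb_single, incYb_single, RU_single_mul]
      rfl

lemma incT_jY (w : W) : incT (jY w) = incY w := by
  induction w using AddMonoidAlgebra.induction_linear with
  | zero => simp
  | add a b ha hb => simp only [map_add, ha, hb]
  | single n c => rw [jY_single, incT_single, incY_single]

lemma incT_jYb (w : W) : incT (jYb w) = incYb w := by
  induction w using AddMonoidAlgebra.induction_linear with
  | zero => simp
  | add a b ha hb => simp only [map_add, ha, hb]
  | single n c => rw [jYb_single, incT_single, incYb_single]

lemma incT_jY_mul (w : W) (x : LR) : incT (jY w * x) = incY w * incT x := by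
  rw [incT_mul, incT_jY]
lemma incT_jYb_mul (w : W) (x : LR) : incT (jYb w * x) = incYb w * incT x := by
  rw [incT_mul, incT_jYb]

/-- For any constants `k, k̄ ∈ ℂ`, the operators `D_s^{(k,k̄)}` close
according to the `𝔟𝔪𝔰₄` bracket: for all symmetry parameters `s₁, s₂` and all
`σ ∈ R[u]`, `D_{s₁}^{(k,k̄)}(D_{s₂}^{(k,k̄)}σ) − D_{s₂}^{(k,k̄)}(D_{s₁}^{(k,k̄)}σ)
= D_{[s₁,s₂]}^{(k,k̄)}σ`.  (For `(k,k̄) = (3/2,−1/2)`, `(2,0)` and `((5−i)/2,(1+i)/2)`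
these are the homogeneous parts of the transformation laws of `σ⁰`, `∂_uσ⁰` and `Ψ⁰_i`.) -/
theorem Dop_closes (k kb : ℂ) (s₁ s₂ : SymParam) (σ : RU) :
    Dop k kb s₁ (Dop k kb s₂ σ) - Dop k kb s₂ (Dop k kb s₁ σ)
      = Dop k kb (sBracket s₁ s₂) σ := by
  simp only [Dop, sBracket, fOf, psiR, LinearMap.add_apply, LinearMap.comp_apply,
    LinearMap.smul_apply, LinearMap.mulLeft_apply,
    map_add, map_sub, map_smul, eth_mul, ethBar_mul, du_mul, ethW_mul,
    incT_mul, incY_mul, incYb_mul, incT_jY, incT_jYb,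
    eth_incT, ethBar_incT, du_incT, eth_incY, ethBar_incY, du_incY,
    eth_incYb, ethBar_incYb, du_incYb, eth_uVar, ethBar_uVar, du_uVar,
    ethBar_eth, eth_du, ethBar_du,
    mul_zero, zero_mul, add_zero, zero_add, mul_one, one_mul, smul_zero, zero_smul,
    mul_add, add_mul, smul_add, mul_sub, sub_mul, smul_sub]
  simp only [Algebra.smul_def, map_mul, map_ofNat, map_one, map_div₀]
  ring
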